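/- Let (G, λ) be an undirected temporal graph realizing a directed graph D = (V,A) via strict temporal paths, and let e = {u,v} be an edge of G that is not contained in any triangle of the solid graph G. If λ is minimal on e (no proper subset of λ(e) still realizes D), then |λ(e)| ≤ 2. -/
import Mathlib


/-- Strict temporal reachability: `SReach lab u v t` means there is a walk from `u` to `v`
whose steps carry strictly increasing labels, arriving at time `t`. -/
inductive SReach {V : Type*} (lab : V → V → Finset ℕ) : V → V → ℕ → Prop
  | single {u v : V} {t : ℕ} (h : t ∈ lab u v) : SReach lab u v t
  | cons {u v w : V} {t t' : ℕ} (h : SReach lab u v t) (h' : t' ∈ lab v w) (hlt : t < t') :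
      SReach lab u w t'

/-- `u` can reach `v` via a strict temporal path. -/
def StrictReachable {V : Type*} (lab : V → V → Finset ℕ) (u v : V) : Prop :=
  ∃ t, SReach lab u v t

/-- Non-strict temporal reachability: labels are non-decreasing along the walk. -/
inductive NSReach {V : Type*} (lab : V → V → Finset ℕ) : V → V → ℕ → Prop
  | single {u v : V} {t : ℕ} (h : t ∈ lab u v) : NSReach lab u v t
  | cons {u v w : V} {t t' : ℕ} (h : NSReach lab u v t) (h' : t' ∈ lab v w) (hle : t ≤ t') :
      NSReach lab u w t'

/-- `u` can reach `v` via a non-strict temporal path. -/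
def NonStrictReachable {V : Type*} (lab : V → V → Finset ℕ) (u v : V) : Prop :=
  ∃ t, NSReach lab u v t

lemma sreach_mono {V : Type*} {lab lab' : V → V → Finset ℕ}
    (hsub : ∀ p q, lab' p q ⊆ lab p q) {x y : V} {t : ℕ}
    (hr : SReach lab' x y t) : SReach lab x y t := by
  induction hr with
  | single h => exact .single (hsub _ _ h)
  | cons h h' hlt ih => exact .cons ih (hsub _ _ h') hlt

/-- If `λ` is minimal on an edge `{u,v}` that lies in no triangle of the solid graph,
then that edge carries at most two labels. -/
theorem stmt17 {V : Type*} [DecidableEq V] (G : SimpleGraph V) (A : V → V → Prop)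
    (lab : V → V → Finset ℕ)
    (hG : ∀ x y, G.Adj x y ↔ x ≠ y ∧ A x y ∧ A y x)
    (hsymm : ∀ x y, lab x y = lab y x)
    (hsupp : ∀ x y, (lab x y).Nonempty → G.Adj x y)
    (hreal : ∀ x y, A x y ↔ x ≠ y ∧ StrictReachable lab x y)
    (u v : V) (hadj : G.Adj u v)
    (hnotri : ∀ x, ¬ (G.Adj u x ∧ G.Adj x v))
    (hmin : ∀ s : Finset ℕ, s ⊂ lab u v →
      ¬ ∀ x y, A x y ↔ x ≠ y ∧ StrictReachable
        (fun p q => if (p = u ∧ q = v) ∨ (p = v ∧ q = u) then s else lab p q) x y) :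
    (lab u v).card ≤ 2 := by
  by_contra hcard
  push_neg at hcard
  have huv : u ≠ v := hadj.ne
  have hne : (lab u v).Nonempty := Finset.card_pos.mp (by omega)
  set a := (lab u v).min' hne with ha_def
  set b := (lab u v).max' hne with hb_def
  have ha : a ∈ lab u v := (lab u v).min'_mem hne
  have hb : b ∈ lab u v := (lab u v).max'_mem hne
  set s : Finset ℕ := (lab u v).erase a with hs_def
  have hscard : 2 ≤ s.card := by
    have h1 : s.card = (lab u v).card - 1 := Finset.card_erase_of_mem ha
    omega
  have hsne : s.Nonempty := Finset.card_pos.mp (by omega)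
  set m := s.min' hsne with hm_def
  have hms : m ∈ s := s.min'_mem hsne
  have hmlab : m ∈ lab u v := Finset.mem_of_mem_erase hms
  have ham : a < m := by
    have h1 : a ≤ m := (lab u v).min'_le m hmlab
    have h2 : m ≠ a := Finset.ne_of_mem_erase hms
    omega
  have hmb : m < b := by
    have h1 : m < s.max' hsne := Finset.min'_lt_max'_of_card s (by omega)
    have h2 : s.max' hsne ≤ b := (lab u v).le_max' _ (Finset.mem_of_mem_erase (s.max'_mem hsne))
    omega
  have hab : a < b := by omega
  -- labels of s sit in lab u v and are > a
  have hs_mem : ∀ c, c ∈ s ↔ c ∈ lab u v ∧ c ≠ a := by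
    intro c
    constructor
    · intro hc; exact ⟨Finset.mem_of_mem_erase hc, Finset.ne_of_mem_erase hc⟩
    · intro ⟨h1, h2⟩; exact Finset.mem_erase.mpr ⟨h2, h1⟩
  have hs_ge : ∀ c ∈ s, m ≤ c := fun c hc => s.min'_le c hc
  -- triangle-freeness: no edge adjacent to {u,v} (other than {u,v}) carries a label in (a,b)
  have hL : ∀ y z c, (y = u ∨ y = v) → ¬ ((y = u ∧ z = v) ∨ (y = v ∧ z = u)) →
      c ∈ lab y z → a < c → b ≤ c := by
    intro y z c hy hpair hc hac
    by_contra hcb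
    push_neg at hcb
    have hadjyz : G.Adj y z := hsupp y z ⟨c, hc⟩
    rcases hy with h | h
    · have hzv : z ≠ v := fun hz => hpair (Or.inl ⟨h, hz⟩)
      rw [h] at hc hadjyz
      have hAvz : A v z := (hreal v z).mpr ⟨Ne.symm hzv, c,
        .cons (.single (show a ∈ lab v u by rw [hsymm v u]; exact ha)) hc hac⟩
      have hAzv : A z v := (hreal z v).mpr ⟨hzv, b,
        .cons (.single (show c ∈ lab z u by rw [hsymm z u]; exact hc)) hb hcb⟩
      have hadjzv : G.Adj z v := (hG z v).mpr ⟨hzv, hAzv, hAvz⟩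
      exact hnotri z ⟨hadjyz, hadjzv⟩
    · have hzu : z ≠ u := fun hz => hpair (Or.inr ⟨h, hz⟩)
      rw [h] at hc hadjyz
      have hAuz : A u z := (hreal u z).mpr ⟨Ne.symm hzu, c, .cons (.single ha) hc hac⟩
      have hAzu : A z u := (hreal z u).mpr ⟨hzu, b,
        .cons (.single (show c ∈ lab z v by rw [hsymm z v]; exact hc))
          (show b ∈ lab v u by rw [hsymm v u]; exact hb) hcb⟩
      have hadjuz : G.Adj u z := (hG u z).mpr ⟨Ne.symm hzu, hAuz, hAzu⟩
      exact hnotri z ⟨hadjuz, hadjyz.symm⟩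
  set lab' : V → V → Finset ℕ :=
    fun p q => if (p = u ∧ q = v) ∨ (p = v ∧ q = u) then s else lab p q with hlab'_def
  have hlab'_pair : ∀ p q, ((p = u ∧ q = v) ∨ (p = v ∧ q = u)) → lab' p q = s := by
    intro p q h; simp only [hlab'_def, if_pos h]
  have hlab'_np : ∀ p q, ¬ ((p = u ∧ q = v) ∨ (p = v ∧ q = u)) → lab' p q = lab p q := by
    intro p q h; simp only [hlab'_def, if_neg h]
  have hlabpair : ∀ p q, ((p = u ∧ q = v) ∨ (p = v ∧ q = u)) → lab p q = lab u v := by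
    intro p q h
    rcases h with ⟨h1, h2⟩ | ⟨h1, h2⟩
    · rw [h1, h2]
    · rw [h1, h2, hsymm v u]
  have hsub : ∀ p q, lab' p q ⊆ lab p q := by
    intro p q
    by_cases h : (p = u ∧ q = v) ∨ (p = v ∧ q = u)
    · rw [hlab'_pair p q h, hlabpair p q h]; exact Finset.erase_subset _ _
    · rw [hlab'_np p q h]
  -- the key simulation lemma
  have key : ∀ x y t, SReach lab x y t →
      (∃ t' ≤ t, SReach lab' x y t')
      ∨ (t = a ∧ ∃ o, ((y = u ∧ o = v) ∨ (y = v ∧ o = u)) ∧ SReach lab' x y m ∧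
          (x = o ∨ ∃ p < a, SReach lab' x o p))
      ∨ (t = m ∧ (y = u ∨ y = v) ∧ (x = y ∨ ∃ p < a, SReach lab' x y p)) := by
    intro x y t hr
    induction hr with
    | @single y t h =>
      by_cases hpair : (x = u ∧ y = v) ∨ (x = v ∧ y = u)
      · by_cases hta : t = a
        · refine Or.inr (Or.inl ⟨hta, x, ?_, .single (by rw [hlab'_pair x y hpair]; exact hms),
            Or.inl rfl⟩)
          rcases hpair with ⟨h1, h2⟩ | ⟨h1, h2⟩
          · exact Or.inr ⟨h2, h1⟩
          · exact Or.inl ⟨h2, h1⟩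
        · refine Or.inl ⟨t, le_refl t, .single ?_⟩
          rw [hlab'_pair x y hpair, hs_mem]
          exact ⟨by rw [← hlabpair x y hpair]; exact h, hta⟩
      · exact Or.inl ⟨t, le_refl t, .single (by rw [hlab'_np x y hpair]; exact h)⟩
    | @cons y z t c h h' hlt ih =>
      rcases ih with ⟨t', ht', r'⟩ | ⟨hta, o, hyo, rm, hx⟩ | ⟨htm, hy, hx⟩
      · -- normal state
        by_cases hpair : (y = u ∧ z = v) ∨ (y = v ∧ z = u)
        · by_cases hca : c = a
          · refine Or.inr (Or.inl ⟨hca, y, ?_, ?_, Or.inr ⟨t', by omega, r'⟩⟩)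
            · rcases hpair with ⟨h1, h2⟩ | ⟨h1, h2⟩
              · exact Or.inr ⟨h2, h1⟩
              · exact Or.inl ⟨h2, h1⟩
            · refine .cons r' (by rw [hlab'_pair y z hpair]; exact hms) (by omega)
          · refine Or.inl ⟨c, le_refl c, .cons r' ?_ (by omega)⟩
            rw [hlab'_pair y z hpair, hs_mem]
            exact ⟨by rw [← hlabpair y z hpair]; exact h', hca⟩
        · exact Or.inl ⟨c, le_refl c, .cons r' (by rw [hlab'_np y z hpair]; exact h') (by omega)⟩
      · -- a-state: t = a, at y ∈ {u,v}, lab'-reachable at time m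
        subst hta
        by_cases hpair : (y = u ∧ z = v) ∨ (y = v ∧ z = u)
        · have hcs : c ∈ s := by
            rw [hs_mem]
            exact ⟨by rw [← hlabpair y z hpair]; exact h', by omega⟩
          have hmc : m ≤ c := hs_ge c hcs
          by_cases hcm : c = m
          · -- skip state
            refine Or.inr (Or.inr ⟨hcm, ?_, ?_⟩)
            · rcases hpair with ⟨h1, h2⟩ | ⟨h1, h2⟩
              · exact Or.inr h2
              · exact Or.inl h2
            · have hoz : o = z := by
                rcases hpair with ⟨h1, h2⟩ | ⟨h1, h2⟩ <;>
                  rcases hyo with ⟨h3, h4⟩ | ⟨h3, h4⟩ <;>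
                  first
                  | (subst h1; subst h2; subst h4; rfl)
                  | (exfalso; exact huv (h3 ▸ h1 ▸ rfl))
              rw [← hoz]; exact hx
          · refine Or.inl ⟨c, le_refl c, .cons rm (by rw [hlab'_pair y z hpair]; exact hcs)
              (by omega)⟩
        · have hy' : y = u ∨ y = v := by
            rcases hyo with ⟨h1, _⟩ | ⟨h1, _⟩
            · exact Or.inl h1
            · exact Or.inr h1
          have hbc : b ≤ c := hL y z c hy' hpair h' (by omega)
          exact Or.inl ⟨c, le_refl c,
            .cons rm (by rw [hlab'_np y z hpair]; exact h') (by omega)⟩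
      · -- skip state: t = m, at y ∈ {u,v}
        subst htm
        have hcs' : c ∈ lab' y z := by
          by_cases hpair : (y = u ∧ z = v) ∨ (y = v ∧ z = u)
          · rw [hlab'_pair y z hpair, hs_mem]
            exact ⟨by rw [← hlabpair y z hpair]; exact h', by omega⟩
          · rw [hlab'_np y z hpair]; exact h'
        rcases hx with rfl | ⟨p, hpa, rp⟩
        · exact Or.inl ⟨c, le_refl c, .single hcs'⟩
        · exact Or.inl ⟨c, le_refl c, .cons rp hcs' (by omega)⟩
  -- now contradict minimality
  refine hmin s (Finset.erase_ssubset ha) ?_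
  intro x y
  constructor
  · intro hAxy
    obtain ⟨hxy, t, hr⟩ := (hreal x y).mp hAxy
    refine ⟨hxy, ?_⟩
    rcases key x y t hr with ⟨t', _, r'⟩ | ⟨_, o, _, rm, _⟩ | ⟨_, _, hx⟩
    · exact ⟨t', r'⟩
    · exact ⟨m, rm⟩
    · rcases hx with rfl | ⟨p, _, rp⟩
      · exact absurd rfl hxy
      · exact ⟨p, rp⟩
  · intro ⟨hxy, t, r'⟩
    exact (hreal x y).mpr ⟨hxy, t, sreach_mono hsub r'⟩
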